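/- In the Artin-Schreier tower over F_p, for every i ≥ -1 one has tr_{L_i/F_p}(a_i) = (-1)^(i+1). In particular each extension L_{i+1}/L_i has degree p. -/

import Mathlib

open Polynomial IntermediateField

section ASHelpers

variable {p : ℕ} [Fact p.Prime]

lemma eq_of_monic_dvd_deg' {K : Type*} [Field K] {g f : K[X]} (hg : g.Monic) (hf : f.Monic)
    (hdvd : g ∣ f) (hdeg : f.natDegree ≤ g.natDegree) : g = f := by
  obtain ⟨q, rfl⟩ := hdvd
  have hq : q.Monic := hg.of_mul_monic_left hf
  have := natDegree_mul hg.ne_zero hq.ne_zero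
  have hq0 : q.natDegree = 0 := by omega
  rw [hq.natDegree_eq_zero.mp hq0, mul_one]


lemma frob_trace_ne' {p : ℕ} [Fact p.Prime] {K : Type*} [Field K] [Finite K]
    [Algebra (ZMod p) K] {a : K} (ha : Algebra.trace (ZMod p) K a ≠ 0) (y : K) :
    y ^ p - y ≠ a := by
  intro h
  haveI : CharP K p := charP_of_injective_algebraMap' (ZMod p) (A := K) p
  let σ : K ≃ₐ[ZMod p] K := AlgEquiv.ofBijective
    { toRingHom := frobenius K p,
      commutes' := fun r => by
        simp only [frobenius_def, RingHom.toMonoidHom_eq_coe, OneHom.toFun_eq_coe,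
          MonoidHom.toOneHom_coe, MonoidHom.coe_coe]
        rw [← map_pow, ZMod.pow_card] }
    (Finite.injective_iff_bijective.mp (frobenius K p).injective)
  apply ha
  have hσ : σ y = y ^ p := rfl
  rw [← h, map_sub, ← hσ, Algebra.trace_eq_of_algEquiv σ y, sub_self]

lemma AS_minpoly {K L : Type*} [Field K] [Field L] [Algebra K L] [CharP K p]
    {a : K} {θ : L} (hθ : θ ^ p - θ = algebraMap K L a)
    (hroot : ∀ y : K, y ^ p - y ≠ a) :
    minpoly K θ = X ^ p - X - C a := by
  classical
  have hp : p.Prime := Fact.out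
  have hp2 : 2 ≤ p := hp.two_le
  haveI : CharP L p := charP_of_injective_algebraMap (algebraMap K L).injective p
  set f : K[X] := X ^ p - X - C a with hf
  have hfe : f = X ^ p - (X + C a) := by ring
  have hxa : (X + C a : K[X]).degree < (p : WithBot ℕ) := by
    refine lt_of_le_of_lt (degree_add_le _ _) (max_lt ?_ (degree_C_le.trans_lt ?_))
    · rw [degree_X]; exact_mod_cast by omega
    · exact_mod_cast hp.pos
  have hfm : f.Monic := by rw [hfe]; exact monic_X_pow_sub hxa
  have hfdeg : f.degree = p := by
    rw [hfe, degree_sub_eq_left_of_degree_lt (by rwa [degree_X_pow]), degree_X_pow]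
  have hfd : f.natDegree = p := natDegree_eq_of_degree_eq_some hfdeg
  have haev : aeval θ f = 0 := by
    simp only [hf, map_sub, map_pow, aeval_X, aeval_C]
    rw [sub_sub, sub_eq_zero, ← hθ]; ring
  have hf0 : f ≠ 0 := hfm.ne_zero
  have hint : IsIntegral K θ := ⟨f, hfm, haev⟩
  have hgm : (minpoly K θ).Monic := minpoly.monic hint
  have hgdvd : minpoly K θ ∣ f := minpoly.dvd K θ haev
  have hcast : ∀ k : ℕ, ((k : L)) ^ p = (k : L) := by
    intro k
    have h1 : ((k : L)) = ZMod.castHom (dvd_refl p) L (k : ZMod p) := by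
      rw [map_natCast]
    rw [h1, ← map_pow, ZMod.pow_card]
  have hroots : ∀ k : ℕ, (θ + (k : L)) ^ p - (θ + (k : L)) = algebraMap K L a := by
    intro k
    rw [add_pow_char, hcast, add_sub_add_right_eq_sub, hθ]
  set m : Multiset L := (Multiset.range p).map (fun k : ℕ => θ + (k : L)) with hm
  have hmnodup : m.Nodup := by
    refine (Multiset.nodup_range p).map_on ?_
    intro k₁ h₁ k₂ h₂ h
    rw [Multiset.mem_range] at h₁ h₂
    exact CharP.natCast_injOn_Iio L p h₁ h₂ (add_left_cancel h)
  set fL : L[X] := f.map (algebraMap K L) with hfL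
  have hfLm : fL.Monic := hfm.map _
  have hfL0 : fL ≠ 0 := hfLm.ne_zero
  have hfLd : fL.natDegree = p := by rw [hfL, natDegree_map, hfd]
  have hroot_mem : ∀ r ∈ m, r ∈ fL.roots := by
    intro r hr
    rw [hm, Multiset.mem_map] at hr
    obtain ⟨k, -, rfl⟩ := hr
    rw [mem_roots hfL0, IsRoot.def, eval_map, ← aeval_def]
    simp only [hf, map_sub, map_pow, aeval_X, aeval_C]
    rw [sub_sub, sub_eq_zero, ← hroots k]; ring
  have hmle : m ≤ fL.roots := by
    rw [Multiset.le_iff_count]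
    intro r
    rcases Nat.eq_zero_or_pos (m.count r) with h0 | hpos
    · simp [h0]
    · have hrm : r ∈ m := by rwa [← Multiset.count_pos]
      have h1 : m.count r = 1 := le_antisymm (Multiset.nodup_iff_count_le_one.mp hmnodup r) hpos
      rw [h1]
      exact Multiset.count_pos.mpr (hroot_mem r hrm)
  have hmcard : Multiset.card m = p := by simp [hm]
  have hre : fL.roots = m :=
    (Multiset.eq_of_le_of_card_le hmle (by rw [hmcard]; exact hfLd ▸ fL.card_roots')).symm
  have hsplit : fL.Splits :=
    splits_iff_card_roots.mpr (by rw [hre, hmcard, hfLd])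
  set gL : L[X] := (minpoly K θ).map (algebraMap K L) with hgL
  have hgLm : gL.Monic := hgm.map _
  have hgLdvd : gL ∣ fL := Polynomial.map_dvd _ hgdvd
  have hgsplit : gL.Splits := hsplit.of_dvd hfL0 hgLdvd
  have hnext : gL.nextCoeff = - gL.roots.sum :=
    hgsplit.nextCoeff_eq_neg_sum_roots_of_monic hgLm
  have hgroots_le : gL.roots ≤ fL.roots := roots.le_of_dvd hfL0 hgLdvd
  set d := (minpoly K θ).natDegree with hd
  have hcards : Multiset.card gL.roots = d := by
    rw [splits_iff_card_roots.mp hgsplit, hgL, natDegree_map]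
  have hdecomp : ∀ s : Multiset L, (∀ r ∈ s, ∃ k : ℕ, r = θ + (k:L)) →
      ∃ n : ℕ, s.sum = (Multiset.card s) • θ + (n : L) := by
    intro s
    refine Multiset.induction_on s (fun _ => ⟨0, by simp⟩) ?_
    intro r s ih h
    obtain ⟨k, rfl⟩ := h r (Multiset.mem_cons_self r s)
    obtain ⟨n, hn⟩ := ih (fun x hx => h x (Multiset.mem_cons_of_mem hx))
    refine ⟨k + n, ?_⟩
    rw [Multiset.sum_cons, hn, Multiset.card_cons, succ_nsmul]
    push_cast; ring
  obtain ⟨n, hsum⟩ := hdecomp gL.roots (fun r hr => by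
    have hrm : r ∈ m := hre ▸ Multiset.mem_of_le hgroots_le hr
    rw [hm, Multiset.mem_map] at hrm
    obtain ⟨k, -, rfl⟩ := hrm
    exact ⟨k, rfl⟩)
  have hd_pos : 0 < d := minpoly.natDegree_pos hint
  have hdle : d ≤ p := hfd ▸ natDegree_le_of_dvd hgdvd hf0
  have hkey : algebraMap K L ((minpoly K θ).nextCoeff) = -(d • θ + (n : L)) := by
    rw [← nextCoeff_map (algebraMap K L).injective, hnext, hsum, hcards]
  have hdp : d = p := by
    by_contra hne
    have hdlt : d < p := lt_of_le_of_ne hdle hne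
    have hdK : (d : K) ≠ 0 := by
      rw [Ne, CharP.cast_eq_zero_iff K p]
      exact fun hdvd => absurd (Nat.le_of_dvd hd_pos hdvd) (not_le.mpr hdlt)
    have hdL0 : (d : L) ≠ 0 := fun h => hdK ((algebraMap K L).injective
      (show algebraMap K L (d:K) = algebraMap K L 0 by rw [map_natCast, h, map_zero]))
    set y : K := (d : K)⁻¹ * (-(minpoly K θ).nextCoeff - (n:K)) with hy
    have h2 : (d:L) * θ = algebraMap K L (-(minpoly K θ).nextCoeff - (n:K)) := by
      rw [map_sub, map_neg, hkey, nsmul_eq_mul, map_natCast]; ring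
    have hθy : θ = algebraMap K L y := by
      rw [hy, map_mul, map_inv₀, map_natCast, ← h2, inv_mul_cancel_left₀ hdL0]
    refine hroot y ((algebraMap K L).injective ?_)
    rw [map_sub, map_pow, ← hθy, hθ]
  exact eq_of_monic_dvd_deg' hgm hfm hgdvd (by rw [hfd, ← hdp])

lemma AS_step' {K L : Type*} [Field K] [Field L] [Algebra K L] [CharP K p]
    [FiniteDimensional K L]
    {a : K} {θ : L} (hθ : θ ^ p - θ = algebraMap K L a)
    (hroot : ∀ y : K, y ^ p - y ≠ a)
    (hgen : IntermediateField.adjoin K {θ} = ⊤) :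
    Module.finrank K L = p ∧
      Algebra.trace K L (algebraMap K L a * θ ^ (p - 1)) = -a := by
  classical
  have hp : p.Prime := Fact.out
  have hp2 : 2 ≤ p := hp.two_le
  haveI : CharP L p := charP_of_injective_algebraMap (algebraMap K L).injective p
  have hmp : minpoly K θ = X ^ p - X - C a := AS_minpoly hθ hroot
  have hmpd : (minpoly K θ).natDegree = p := by
    rw [hmp]
    have hxa : (X + C a : K[X]).degree < (p : WithBot ℕ) := by
      refine lt_of_le_of_lt (degree_add_le _ _) (max_lt ?_ (degree_C_le.trans_lt ?_))
      · rw [degree_X]; exact_mod_cast by omega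
      · exact_mod_cast hp.pos
    have hfe : (X ^ p - X - C a : K[X]) = X ^ p - (X + C a) := by ring
    rw [hfe]
    exact natDegree_eq_of_degree_eq_some
      (by rw [degree_sub_eq_left_of_degree_lt (by rwa [degree_X_pow]), degree_X_pow])
  have hfin : Module.finrank K L = p := by
    have h1 := adjoin.finrank (IsIntegral.of_finite K θ)
    rw [hgen, finrank_top', hmpd] at h1
    exact h1
  refine ⟨hfin, ?_⟩
  have ha0 : a ≠ 0 := Ne.symm (by simpa [zero_pow hp.pos.ne'] using hroot 0)
  set A := algebraMap K L a with hA
  have hA0 : A ≠ 0 := fun h => ha0 ((algebraMap K L).injective (by rw [← hA, h, map_zero]))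
  have hθ0 : θ ≠ 0 := by
    intro h
    apply hA0
    rw [← hθ, h, zero_pow hp.pos.ne', sub_zero]
  have hθp : θ ^ p = θ + A := by rw [← hθ]; ring
  have hθpow : θ ^ (p-1) * θ = θ ^ p := by rw [← pow_succ]; congr 1; omega
  set g2 : K[X] := X ^ p + C a⁻¹ * X ^ (p-1) - C a⁻¹ with hg2
  have hg2e : g2 = X ^ p - (C a⁻¹ - C a⁻¹ * X ^ (p-1)) := by ring
  have hlow : (C a⁻¹ - C a⁻¹ * X ^ (p-1) : K[X]).degree < (p : WithBot ℕ) := by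
    refine lt_of_le_of_lt (degree_sub_le _ _)
      (max_lt (degree_C_le.trans_lt (by exact_mod_cast hp.pos)) ?_)
    refine lt_of_le_of_lt (degree_C_mul_X_pow_le _ _) ?_
    exact_mod_cast Nat.sub_lt hp.pos one_pos
  have hg2m : g2.Monic := by rw [hg2e]; exact monic_X_pow_sub hlow
  have hg2d : g2.natDegree = p := by
    rw [hg2e]
    exact natDegree_eq_of_degree_eq_some
      (by rw [degree_sub_eq_left_of_degree_lt (by rwa [degree_X_pow]), degree_X_pow])
  have hθp0 : θ ^ p ≠ 0 := pow_ne_zero _ hθ0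
  have hθp10 : θ ^ (p-1) ≠ 0 := pow_ne_zero _ hθ0
  have hginv : aeval θ⁻¹ g2 = 0 := by
    simp only [hg2, map_add, map_sub, map_pow, map_mul, aeval_X, aeval_C, map_inv₀]
    rw [inv_pow, inv_pow]
    have hA0' : algebraMap K L a ≠ 0 := hA0
    field_simp
    rw [← hA]
    linear_combination (-hθpow - θ^(p-1) * hθp)
  have hintinv : IsIntegral K θ⁻¹ := IsIntegral.of_finite K _
  have hadj : IntermediateField.adjoin K {θ⁻¹} = ⊤ := by
    refine le_antisymm le_top ?_
    rw [← hgen, adjoin_le_iff, Set.singleton_subset_iff]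
    have h2 := (IntermediateField.adjoin K {θ⁻¹}).inv_mem
      (mem_adjoin_simple_self K θ⁻¹)
    rwa [inv_inv] at h2
  have hdeg_inv : (minpoly K θ⁻¹).natDegree = p := by
    have h1 := adjoin.finrank hintinv
    rw [hadj, finrank_top', hfin] at h1
    exact h1.symm
  have hmin2 : minpoly K θ⁻¹ = g2 :=
    eq_of_monic_dvd_deg' (minpoly.monic hintinv) hg2m (minpoly.dvd K _ hginv)
      (by rw [hdeg_inv, hg2d])
  set pb : PowerBasis K L :=
    (adjoin.powerBasis hintinv).map ((equivOfEq hadj).trans topEquiv) with hpb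
  have hpbgen : pb.gen = θ⁻¹ := rfl
  have htrinv : Algebra.trace K L θ⁻¹ = -a⁻¹ := by
    have h := PowerBasis.trace_gen_eq_nextCoeff_minpoly pb
    rw [hpbgen, hmin2] at h
    rw [h]
    congr 1
    rw [nextCoeff_of_natDegree_pos (by rw [hg2d]; omega), hg2d]
    rw [hg2]
    simp only [coeff_sub, coeff_add, coeff_X_pow, coeff_C_mul, coeff_C]
    rw [if_neg (by omega : ¬ (p-1 = p)), if_neg (by omega : ¬ (p-1 = 0))]
    simp
  have hsm : ∀ (cc : K) (x : L),
      Algebra.trace K L (algebraMap K L cc * x) = cc * Algebra.trace K L x := by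
    intro cc x
    rw [← Algebra.smul_def, _root_.map_smul, smul_eq_mul]
  have htr1 : Algebra.trace K L (1 : L) = 0 := by
    have := Algebra.trace_algebraMap (R := K) (S := L) 1
    rw [map_one] at this
    rw [this, hfin, nsmul_eq_mul, mul_one, CharP.cast_eq_zero]
  have hθpm1 : θ ^ (p-1) = 1 + A * θ⁻¹ := by
    have h1 : θ ^ (p-1) = θ ^ p * θ⁻¹ := by
      rw [← hθpow, mul_assoc, mul_inv_cancel₀ hθ0, mul_one]
    rw [h1, hθp, add_mul, mul_inv_cancel₀ hθ0]
  rw [hsm, hθpm1, map_add, htr1, hsm, htrinv]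
  field_simp
  norm_num

lemma gen_adjoin_top {K Ω : Type*} [Field K] [Field Ω] [Algebra K Ω] (x : Ω) :
    IntermediateField.adjoin K {IntermediateField.AdjoinSimple.gen K x} = ⊤ := by
  apply lift_injective
  rw [lift_adjoin_simple, lift_top, AdjoinSimple.coe_gen]

lemma transfer_all {F Ω : Type*} [Field F] [Field Ω] [Algebra F Ω]
    {E1 E2 : IntermediateField F Ω} (h : E1 = E2) {b b2 : Ω} (hb2 : b2 = b) {n n2 : ℕ}
    (hn2 : n2 = n) {r r2 : F} (hr2 : r2 = r)
    (hfd : FiniteDimensional F E1) (hfr : Module.finrank F E1 = n)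
    (htr : ∀ hb : b ∈ E1, Algebra.trace F E1 ⟨b, hb⟩ = r) :
    FiniteDimensional F E2 ∧ Module.finrank F E2 = n2 ∧
      ∀ hb : b2 ∈ E2, Algebra.trace F E2 ⟨b2, hb⟩ = r2 := by
  subst h; subst hb2; subst hn2; subst hr2; exact ⟨hfd, hfr, htr⟩

set_option maxHeartbeats 1000000 in
lemma step_lemma {p : ℕ} [Fact p.Prime] {Ω : Type*} [Field Ω] [Algebra (ZMod p) Ω]
    [Algebra.IsAlgebraic (ZMod p) Ω]
    (E : IntermediateField (ZMod p) Ω) [FiniteDimensional (ZMod p) E]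
    {b xx : Ω} (hb : b ∈ E) (hbx : xx ^ p - xx = b)
    {n : ℕ} (hfr : Module.finrank (ZMod p) E = n)
    {r : ZMod p} (hr : r ≠ 0)
    (htr : Algebra.trace (ZMod p) E ⟨b, hb⟩ = r) :
    FiniteDimensional (ZMod p) ↥((adjoin (↥E) {xx}).restrictScalars (ZMod p)) ∧
    Module.finrank (ZMod p) ↥((adjoin (↥E) {xx}).restrictScalars (ZMod p)) = n * p ∧
    ∀ hbb : b * xx ^ (p-1) ∈ (adjoin (↥E) {xx}).restrictScalars (ZMod p),
      Algebra.trace (ZMod p) ↥((adjoin (↥E) {xx}).restrictScalars (ZMod p))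
        ⟨b * xx ^ (p-1), hbb⟩ = -r := by
  haveI : Finite ↥E := Module.finite_of_finite (ZMod p)
  haveI : CharP ↥E p := charP_of_injective_algebraMap' (ZMod p) p
  have hrne : Algebra.trace (ZMod p) ↥E ⟨b, hb⟩ ≠ 0 := by rw [htr]; exact hr
  have hroot : ∀ y : ↥E, y ^ p - y ≠ ⟨b, hb⟩ := frob_trace_ne' hrne
  have hint : IsIntegral (↥E) xx :=
    ((Algebra.IsAlgebraic.isAlgebraic (R := ZMod p) xx).isIntegral).tower_top
  haveI fdM : FiniteDimensional (↥E) ↥(↥E)⟮xx⟯ := adjoin.finiteDimensional hint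
  have hθ : (AdjoinSimple.gen (↥E) xx) ^ p - AdjoinSimple.gen (↥E) xx
      = algebraMap (↥E) ↥(↥E)⟮xx⟯ ⟨b, hb⟩ := by
    apply Subtype.ext
    push_cast
    rw [AdjoinSimple.coe_gen]
    exact hbx
  obtain ⟨hfrk, htrM⟩ := AS_step' hθ hroot (gen_adjoin_top xx)
  haveI fdF : FiniteDimensional (ZMod p) ↥(↥E)⟮xx⟯ :=
    FiniteDimensional.trans (ZMod p) (↥E) ↥(↥E)⟮xx⟯
  refine ⟨fdF, ?_, ?_⟩
  · have hh : Module.finrank (ZMod p) ↥(↥E)⟮xx⟯ = n * p := by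
      rw [← Module.finrank_mul_finrank (ZMod p) (↥E) ↥(↥E)⟮xx⟯, hfr, hfrk]
    exact hh
  · intro hbb
    have hel : (⟨b * xx ^ (p-1), hbb⟩ : ↥((adjoin (↥E) {xx}).restrictScalars (ZMod p)))
        = algebraMap (↥E) ↥(↥E)⟮xx⟯ ⟨b, hb⟩ * (AdjoinSimple.gen (↥E) xx) ^ (p-1) := by
      apply Subtype.ext
      push_cast
      rw [AdjoinSimple.coe_gen, IntermediateField.algebraMap_apply]
    have h2 : Algebra.trace (ZMod p) (↥E)
        (Algebra.trace (↥E) ↥(↥E)⟮xx⟯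
          (algebraMap (↥E) ↥(↥E)⟮xx⟯ ⟨b, hb⟩ * (AdjoinSimple.gen (↥E) xx) ^ (p-1)))
        = Algebra.trace (ZMod p) ↥(↥E)⟮xx⟯
          (algebraMap (↥E) ↥(↥E)⟮xx⟯ ⟨b, hb⟩ * (AdjoinSimple.gen (↥E) xx) ^ (p-1)) :=
      Algebra.trace_trace _
    have hfinal : Algebra.trace (ZMod p) ↥(↥E)⟮xx⟯
        (algebraMap (↥E) ↥(↥E)⟮xx⟯ ⟨b, hb⟩ * (AdjoinSimple.gen (↥E) xx) ^ (p-1)) = -r := by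
      rw [← h2, htrM, map_neg, htr]
    rw [hel]
    exact hfinal

end ASHelpers

theorem trace_a_i_eq_neg_one_pow (p : ℕ) [Fact p.Prime]
    (c : ℕ → AlgebraicClosure (ZMod p))
    (hc : ∀ i, c i ^ p - c i = (∏ j ∈ Finset.range i, c j) ^ (p - 1))
    (i : ℕ)
    (ha : (∏ j ∈ Finset.range (i + 1), c j) ^ (p - 1) ∈
      Algebra.adjoin (ZMod p) {x | ∃ j ≤ i, x = c j}) :
    Algebra.trace (ZMod p) (Algebra.adjoin (ZMod p) {x | ∃ j ≤ i, x = c j})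
      ⟨(∏ j ∈ Finset.range (i + 1), c j) ^ (p - 1), ha⟩ = (-1) ^ (i + 1) ∧
    Module.finrank (ZMod p)
      (Algebra.adjoin (ZMod p) {x | ∃ j ≤ i, x = c j}) = p ^ (i + 1) := by
  have hInt : ∀ x : AlgebraicClosure (ZMod p), IsIntegral (ZMod p) x := fun x =>
    (Algebra.IsAlgebraic.isAlgebraic x).isIntegral
  suffices H : ∀ k : ℕ,
      FiniteDimensional (ZMod p) ↥(adjoin (ZMod p) {x | ∃ j ≤ k, x = c j}) ∧
      Module.finrank (ZMod p) ↥(adjoin (ZMod p) {x | ∃ j ≤ k, x = c j}) = p ^ (k+1) ∧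
      ∀ h : (∏ j ∈ Finset.range (k + 1), c j) ^ (p - 1) ∈ adjoin (ZMod p) {x | ∃ j ≤ k, x = c j},
        Algebra.trace (ZMod p) ↥(adjoin (ZMod p) {x | ∃ j ≤ k, x = c j})
          ⟨(∏ j ∈ Finset.range (k + 1), c j) ^ (p - 1), h⟩ = (-1) ^ (k+1) by
    obtain ⟨fd, hfr, htr⟩ := H i
    have halg : (adjoin (ZMod p) {x | ∃ j ≤ i, x = c j}).toSubalgebra
        = Algebra.adjoin (ZMod p) {x | ∃ j ≤ i, x = c j} :=
      adjoin_toSubalgebra_of_isAlgebraic (fun x _ => Algebra.IsAlgebraic.isAlgebraic x)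
    have ha' : (∏ j ∈ Finset.range (i + 1), c j) ^ (p - 1)
        ∈ adjoin (ZMod p) {x | ∃ j ≤ i, x = c j} := by
      rw [← mem_toSubalgebra, halg]; exact ha
    let e : ↥(Algebra.adjoin (ZMod p) {x | ∃ j ≤ i, x = c j})
        ≃ₐ[ZMod p] ↥(adjoin (ZMod p) {x | ∃ j ≤ i, x = c j}) :=
      Subalgebra.equivOfEq _ _ halg.symm
    constructor
    · have h1 := Algebra.trace_eq_of_algEquiv e
        ⟨(∏ j ∈ Finset.range (i + 1), c j) ^ (p - 1), ha⟩
      have h2 : e ⟨(∏ j ∈ Finset.range (i + 1), c j) ^ (p - 1), ha⟩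
          = ⟨(∏ j ∈ Finset.range (i + 1), c j) ^ (p - 1), ha'⟩ := by
        apply Subtype.ext; rfl
      rw [h2, htr ha'] at h1
      exact h1.symm
    · rw [← hfr]
      exact e.toLinearEquiv.finrank_eq
  intro k
  induction k with
  | zero =>
    have hS0 : {x : AlgebraicClosure (ZMod p) | ∃ j ≤ 0, x = c j} = {c 0} := by
      ext z; simp [Nat.le_zero, eq_comm]
    have hEE : (ZMod p)⟮c 0⟯ = adjoin (ZMod p) {x | ∃ j ≤ 0, x = c j} := by rw [hS0]
    haveI fd0 : FiniteDimensional (ZMod p)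
        ↥(adjoin (ZMod p) ({c 0} : Set (AlgebraicClosure (ZMod p)))) :=
      adjoin.finiteDimensional (hInt (c 0))
    have hroot0 : ∀ y : ZMod p, y ^ p - y ≠ (1 : ZMod p) := by
      intro y h
      rw [ZMod.pow_card, sub_self] at h
      exact zero_ne_one h
    have hθ0 : (AdjoinSimple.gen (ZMod p) (c 0)) ^ p - AdjoinSimple.gen (ZMod p) (c 0)
        = algebraMap (ZMod p) ↥(ZMod p)⟮c 0⟯ 1 := by
      apply Subtype.ext
      push_cast
      rw [AdjoinSimple.coe_gen, hc 0]
      simp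
    obtain ⟨hfrk, htr⟩ := AS_step' hθ0 hroot0 (gen_adjoin_top (c 0))
    refine transfer_all hEE rfl rfl rfl fd0 (by rw [hfrk, pow_one]) ?_
    intro h
    have hel : (⟨(∏ j ∈ Finset.range (0 + 1), c j) ^ (p - 1), h⟩ : ↥(ZMod p)⟮c 0⟯)
        = algebraMap (ZMod p) ↥(ZMod p)⟮c 0⟯ 1 * (AdjoinSimple.gen (ZMod p) (c 0)) ^ (p-1) := by
      apply Subtype.ext
      push_cast
      rw [AdjoinSimple.coe_gen, Finset.prod_range_one, one_mul]
    rw [hel, htr]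
    norm_num
  | succ i ih =>
    obtain ⟨fdi, hfri, htri⟩ := ih
    haveI := fdi
    haveI : Finite ↥(adjoin (ZMod p) {x | ∃ j ≤ i, x = c j}) :=
      Module.finite_of_finite (ZMod p)
    haveI : CharP ↥(adjoin (ZMod p) {x | ∃ j ≤ i, x = c j}) p :=
      charP_of_injective_algebraMap' (ZMod p) p
    have hmem_bb : (∏ j ∈ Finset.range (i + 1), c j) ^ (p - 1)
        ∈ adjoin (ZMod p) {x | ∃ j ≤ i, x = c j} := by
      apply pow_mem
      apply prod_mem
      intro j hj
      apply subset_adjoin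
      exact ⟨j, Nat.lt_succ_iff.mp (Finset.mem_range.mp hj), rfl⟩
    obtain ⟨fd2, hfr2, htr2⟩ := step_lemma (adjoin (ZMod p) {x | ∃ j ≤ i, x = c j})
      hmem_bb (hc (i+1)) hfri (pow_ne_zero _ (neg_ne_zero.mpr one_ne_zero)) (htri hmem_bb)
    have hres : (adjoin (↥(adjoin (ZMod p) {x | ∃ j ≤ i, x = c j})) {c (i+1)}).restrictScalars
          (ZMod p)
        = adjoin (ZMod p) {x | ∃ j ≤ i + 1, x = c j} := by
      rw [adjoin_adjoin_left]
      congr 1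
      ext z
      constructor
      · rintro (⟨j, hj, rfl⟩ | rfl)
        · exact ⟨j, by omega, rfl⟩
        · exact ⟨i+1, le_rfl, rfl⟩
      · rintro ⟨j, hj, rfl⟩
        rcases Nat.lt_or_ge j (i+1) with h' | h'
        · exact Or.inl ⟨j, by omega, rfl⟩
        · have : j = i + 1 := by omega
          subst this; exact Or.inr rfl
    have hb2 : (∏ j ∈ Finset.range (i + 1 + 1), c j) ^ (p - 1)
        = (∏ j ∈ Finset.range (i + 1), c j) ^ (p - 1) * (c (i+1)) ^ (p - 1) := by
      rw [Finset.prod_range_succ, mul_pow]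
    have hn2 : p ^ (i + 1 + 1) = p ^ (i + 1) * p := by rw [pow_succ]
    have hr2 : ((-1 : ZMod p)) ^ (i + 1 + 1) = -((-1 : ZMod p) ^ (i+1)) := by
      rw [pow_succ]; ring
    exact transfer_all hres hb2 hn2 hr2 fd2 hfr2 htr2
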